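/- Let ℋ be a complex Hilbert space and D a densely defined self-adjoint operator on ℋ. If x ∈ dom(δ_D) and μ ∈ ℂ is such that x − μ·1 is invertible in B(ℋ), then (x − μ·1)⁻¹ ∈ dom(δ_D) and δ_D((x − μ·1)⁻¹) = −(x − μ·1)⁻¹ δ_D(x) (x − μ·1)⁻¹. In particular, if δ_D(x) is a compact operator then δ_D((x − μ·1)⁻¹) is a compact operator. -/

import Mathlib

/-!
Statement 5: For a densely defined self-adjoint operator `D` on a complex Hilbert space,
if `x ∈ dom(δ_D)` and `x − μ·1` is invertible in `B(ℋ)` then `(x − μ·1)⁻¹ ∈ dom(δ_D)` and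
`δ_D((x − μ·1)⁻¹) = −(x − μ·1)⁻¹ δ_D(x) (x − μ·1)⁻¹`; in particular if `δ_D(x)` is compact
then so is `δ_D((x − μ·1)⁻¹)`.
-/

set_option linter.unusedSectionVars false
set_option maxHeartbeats 1000000

open scoped ComplexConjugate
open Filter

section AuxLemmas
variable {H : Type*} [NormedAddCommGroup H] [InnerProductSpace ℂ H] [CompleteSpace H]
  {D : H →ₗ.[ℂ] H}

local notation "⟪" a ", " b "⟫" => @inner ℂ _ _ a b

theorem aux_crit (hdense : Dense (D.domain : Set H)) (hsa : IsSelfAdjoint D)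
    {u v : H} (h : ∀ a : D.domain, ⟪v, (a : H)⟫ = ⟪u, D a⟫) :
    ∃ hu : u ∈ D.domain, D ⟨u, hu⟩ = v := by
  have hu' : u ∈ D.adjoint.domain :=
    LinearPMap.mem_adjoint_domain_of_exists u ⟨v, h⟩
  have happ : D.adjoint ⟨u, hu'⟩ = v := LinearPMap.adjoint_apply_eq hdense ⟨u, hu'⟩ h
  have hD : D.adjoint = D := hsa
  rcases LinearPMap.ext_iff.mp hD with ⟨hdom, hfun⟩
  have hu : u ∈ D.domain := hdom ▸ hu'
  refine ⟨hu, ?_⟩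
  have := hfun (x := u) (hf := hu') (hg := hu)
  rw [← this, happ]

theorem aux_symm (hdense : Dense (D.domain : Set H)) (hsa : IsSelfAdjoint D)
    (a b : H) (ha : a ∈ D.domain) (hb : b ∈ D.domain) :
    ⟪D ⟨a, ha⟩, b⟫ = ⟪a, D ⟨b, hb⟩⟫ := by
  have h := LinearPMap.adjoint_isFormalAdjoint hdense (T := D)
  have hD : D.adjoint = D := hsa
  rcases LinearPMap.ext_iff.mp hD with ⟨hdom, hfun⟩
  have ha' : a ∈ D.adjoint.domain := by rw [hdom]; exact ha
  have h2 := h ⟨a, ha'⟩ ⟨b, hb⟩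
  rwa [hfun (x := a) (hf := ha') (hg := ha)] at h2

theorem aux_closed (hdense : Dense (D.domain : Set H)) (hsa : IsSelfAdjoint D)
    {a : ℕ → H} (ha : ∀ k, a k ∈ D.domain) {u v : H}
    (h1 : Tendsto a atTop (nhds u))
    (h2 : Tendsto (fun k => D ⟨a k, ha k⟩) atTop (nhds v)) :
    ∃ hu : u ∈ D.domain, D ⟨u, hu⟩ = v := by
  apply aux_crit hdense hsa
  intro b
  have t1 : Tendsto (fun k => ⟪D ⟨a k, ha k⟩, (b : H)⟫) atTop (nhds ⟪v, (b : H)⟫) :=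
    h2.inner tendsto_const_nhds
  have t2 : Tendsto (fun k => ⟪a k, D b⟫) atTop (nhds ⟪u, D b⟫) :=
    h1.inner tendsto_const_nhds
  have he : (fun k => ⟪D ⟨a k, ha k⟩, (b : H)⟫) = fun k => ⟪a k, D b⟫ := by
    funext k
    exact aux_symm hdense hsa (a k) b (ha k) b.2
  rw [he] at t1
  exact tendsto_nhds_unique t1 t2

theorem aux_est (hdense : Dense (D.domain : Set H)) (hsa : IsSelfAdjoint D)
    {c : ℝ} (hc : 0 ≤ c) (a : H) (ha : a ∈ D.domain) :
    c * ‖a‖ ≤ ‖D ⟨a, ha⟩ + (Complex.I * c) • a‖ ∧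
      ‖D ⟨a, ha⟩‖ ≤ ‖D ⟨a, ha⟩ + (Complex.I * c) • a‖ := by
  set κ : ℂ := Complex.I * c with hκ
  set b := D ⟨a, ha⟩ with hb
  have hreal : conj ⟪b, a⟫ = ⟪b, a⟫ := by
    rw [inner_conj_symm]
    exact (aux_symm hdense hsa a a ha ha).symm
  have him : (⟪b, a⟫ : ℂ).im = 0 := by
    have := congrArg Complex.im hreal
    simpa [Complex.conj_im] using by linarith [congrArg Complex.im hreal, Complex.conj_im ⟪b, a⟫]
  have hre0 : RCLike.re ⟪b, κ • a⟫ = 0 := by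
    rw [inner_smul_right]
    simp [hκ, Complex.mul_re, Complex.mul_im, him]
  have hsq : ‖b + κ • a‖ ^ 2 = ‖b‖ ^ 2 + ‖κ • a‖ ^ 2 := by
    rw [@norm_add_sq ℂ, hre0]
    ring
  have hnκa : ‖κ • a‖ = c * ‖a‖ := by
    rw [norm_smul, hκ]
    simp [Complex.norm_def, Complex.normSq_mk, abs_of_nonneg hc]
  constructor
  · nlinarith [norm_nonneg (b + κ • a), norm_nonneg b, mul_nonneg hc (norm_nonneg a)]
  · nlinarith [norm_nonneg (b + κ • a), norm_nonneg b, mul_nonneg hc (norm_nonneg a)]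

theorem Dsub (a b : H) (ha : a ∈ D.domain) (hb : b ∈ D.domain) :
    D ⟨a - b, sub_mem ha hb⟩ = D ⟨a, ha⟩ - D ⟨b, hb⟩ :=
  D.map_sub ⟨a, ha⟩ ⟨b, hb⟩

theorem Dadd (a b : H) (ha : a ∈ D.domain) (hb : b ∈ D.domain) :
    D ⟨a + b, add_mem ha hb⟩ = D ⟨a, ha⟩ + D ⟨b, hb⟩ :=
  D.map_add ⟨a, ha⟩ ⟨b, hb⟩

theorem Dsmul (r : ℂ) (a : H) (ha : a ∈ D.domain) :
    D ⟨r • a, Submodule.smul_mem _ r ha⟩ = r • D ⟨a, ha⟩ :=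
  D.map_smul r ⟨a, ha⟩

theorem aux_uniq (hdense : Dense (D.domain : Set H)) (hsa : IsSelfAdjoint D)
    {c : ℝ} (hc : 0 < c) {a b : H} (ha : a ∈ D.domain) (hb : b ∈ D.domain)
    (h : D ⟨a, ha⟩ + (Complex.I * c) • a = D ⟨b, hb⟩ + (Complex.I * c) • b) : a = b := by
  have hd : a - b ∈ D.domain := sub_mem ha hb
  have hD : D ⟨a - b, hd⟩ + (Complex.I * c) • (a - b) = 0 := by
    rw [Dsub a b ha hb, smul_sub]
    rw [← sub_eq_zero] at h
    calc D ⟨a, ha⟩ - D ⟨b, hb⟩ + ((Complex.I * c) • a - (Complex.I * c) • b)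
        = D ⟨a, ha⟩ + (Complex.I * c) • a - (D ⟨b, hb⟩ + (Complex.I * c) • b) := by abel
      _ = 0 := h
  have := (aux_est hdense hsa hc.le (a - b) hd).1
  rw [hD, norm_zero] at this
  have : ‖a - b‖ ≤ 0 := by
    by_contra hn
    push_neg at hn
    nlinarith
  exact sub_eq_zero.mp (norm_le_zero_iff.mp this)

theorem aux_surj (hdense : Dense (D.domain : Set H)) (hsa : IsSelfAdjoint D)
    {c : ℝ} (hc : 0 < c) (v : H) :
    ∃ (a : H) (ha : a ∈ D.domain), D ⟨a, ha⟩ + (Complex.I * c) • a = v := by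
  obtain ⟨κ, hκ⟩ : ∃ κ : ℂ, κ = Complex.I * (c : ℂ) := ⟨_, rfl⟩
  -- the range of D + κ as a linear map
  set L : D.domain →ₗ[ℂ] H := D.toFun + κ • D.domain.subtype with hL
  have hLa : ∀ a : D.domain, L a = D a + κ • (a : H) := fun a => rfl
  set M : Submodule ℂ H := LinearMap.range L with hM
  -- M is closed
  have hMclosed : IsClosed (M : Set H) := by
    rw [← isSeqClosed_iff_isClosed]
    intro f v hf hfv
    choose g hg using hf
    -- g k : D.domain with L (g k) = f k
    have hest1 : ∀ k l : ℕ, c * ‖(g k : H) - g l‖ ≤ ‖f k - f l‖ := by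
      intro k l
      have := (aux_est hdense hsa hc.le ((g k : H) - g l) (sub_mem (g k).2 (g l).2)).1
      rw [← hκ] at this
      calc c * ‖(g k : H) - g l‖ ≤ ‖D ⟨(g k : H) - (g l : H), _⟩ + κ • ((g k : H) - g l)‖ := this
        _ = ‖L (g k - g l)‖ := by congr 1
        _ = ‖f k - f l‖ := by rw [map_sub, hg, hg]
    have hest2 : ∀ k l : ℕ, ‖D (g k) - D (g l)‖ ≤ ‖f k - f l‖ := by
      intro k l
      have := (aux_est hdense hsa hc.le ((g k : H) - g l) (sub_mem (g k).2 (g l).2)).2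
      rw [← hκ] at this
      calc ‖D (g k) - D (g l)‖ = ‖D ⟨(g k : H) - (g l : H), sub_mem (g k).2 (g l).2⟩‖ := by
            rw [show (⟨(g k : H) - (g l : H), sub_mem (g k).2 (g l).2⟩ : D.domain) = g k - g l from rfl,
              D.map_sub]
        _ ≤ ‖D ⟨(g k : H) - (g l : H), _⟩ + κ • ((g k : H) - g l)‖ := this
        _ = ‖L (g k - g l)‖ := by congr 1
        _ = ‖f k - f l‖ := by rw [map_sub, hg, hg]
    have hcf : CauchySeq f := hfv.cauchySeq
    have hca : CauchySeq (fun k => (g k : H)) := by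
      rw [Metric.cauchySeq_iff] at hcf ⊢
      intro ε hε
      obtain ⟨N, hN⟩ := hcf (c * ε) (by positivity)
      refine ⟨N, fun m hm n hn => ?_⟩
      have := hN m hm n hn
      rw [dist_eq_norm] at this ⊢
      have h2 := hest1 m n
      nlinarith
    have hcb : CauchySeq (fun k => D (g k)) := by
      rw [Metric.cauchySeq_iff] at hcf ⊢
      intro ε hε
      obtain ⟨N, hN⟩ := hcf ε hε
      refine ⟨N, fun m hm n hn => ?_⟩
      have := hN m hm n hn
      rw [dist_eq_norm] at this ⊢
      exact lt_of_le_of_lt (hest2 m n) this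
    obtain ⟨u, hu⟩ := cauchySeq_tendsto_of_complete hca
    obtain ⟨b, hblim⟩ := cauchySeq_tendsto_of_complete hcb
    have hmem := fun k => (g k).2
    have hDg : (fun k => D ⟨(g k : H), hmem k⟩) = fun k => D (g k) := rfl
    obtain ⟨humem, hDu⟩ := aux_closed hdense hsa hmem hu (by rw [hDg]; exact hblim)
    refine ⟨⟨u, humem⟩, ?_⟩
    have : Tendsto f atTop (nhds (b + κ • u)) := by
      have : Tendsto (fun k => D (g k) + κ • (g k : H)) atTop (nhds (b + κ • u)) :=
        hblim.add (hu.const_smul κ)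
      convert this using 1
      funext k
      rw [← hg k, hLa]
    have hveq : v = b + κ • u := tendsto_nhds_unique hfv this
    rw [hLa]
    show (D ⟨u, humem⟩ : H) + κ • u = v
    rw [hDu, hveq]
  -- M is dense (orthogonal complement is trivial)
  have horth : Mᗮ = ⊥ := by
    rw [Submodule.eq_bot_iff]
    intro u hu
    have h0 : ∀ a : D.domain, ⟪D a + κ • (a : H), u⟫ = 0 := by
      intro a
      have : L a ∈ M := LinearMap.mem_range_self L a
      have := (Submodule.mem_orthogonal M u).mp hu (L a) this
      rwa [hLa] at this
    have hconjκ : conj κ = -κ := by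
      rw [hκ, map_mul, Complex.conj_I, Complex.conj_ofReal]
      ring
    have hκ0 : κ ≠ 0 := by
      rw [hκ, mul_ne_zero_iff]
      exact ⟨Complex.I_ne_zero, Complex.ofReal_ne_zero.mpr (ne_of_gt hc)⟩
    have h1 : ∀ a : D.domain, ⟪(κ • u : H), (a : H)⟫ = ⟪u, D a⟫ := by
      intro a
      have h2 := h0 a
      rw [inner_add_left, inner_smul_left, hconjκ] at h2
      have h3 : ⟪D a, u⟫ = κ * ⟪(a : H), u⟫ := by linear_combination h2
      have e2 : ⟪u, D a⟫ = conj κ * ⟪u, (a : H)⟫ := by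
        rw [← inner_conj_symm u (D a), h3, map_mul, inner_conj_symm]
      rw [inner_smul_left, e2]
    obtain ⟨humem, hDu⟩ := aux_crit hdense hsa h1
    -- D u = κ • u contradicts symmetry unless u = 0
    have hsym := aux_symm hdense hsa u u humem humem
    rw [hDu, inner_smul_left, inner_smul_right] at hsym
    have hκne : conj κ ≠ κ := by
      rw [hconjκ]
      intro h
      apply hκ0
      have h2 : (2 : ℂ) * κ = 0 := by linear_combination -h
      simpa using h2
    have : ⟪u, u⟫ = 0 := by
      by_contra hne
      exact hκne (mul_right_cancel₀ hne hsym)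
    exact inner_self_eq_zero.mp this
  have hMtop : M = ⊤ := by
    haveI : CompleteSpace M := hMclosed.completeSpace_coe
    exact Submodule.orthogonal_eq_bot_iff.mp horth
  have hv : v ∈ M := by rw [hMtop]; trivial
  obtain ⟨a, hav⟩ := hv
  refine ⟨(a : H), a.2, ?_⟩
  rw [hκ] at hLa
  rw [← hav, hLa]

end AuxLemmas

/-- `CommutatorRel D x y` means: `x` preserves `dom D` and `D ∘ x - x ∘ D = y` on `dom D`,
i.e. `x ∈ dom(δ_D)` with `δ_D(x) = y`. -/
def CommutatorRel {H : Type*} [NormedAddCommGroup H] [InnerProductSpace ℂ H]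
    (D : H →ₗ.[ℂ] H) (x y : H →L[ℂ] H) : Prop :=
  ∀ (ξ : H) (hξ : ξ ∈ D.domain), ∃ hx : x ξ ∈ D.domain,
    D ⟨x ξ, hx⟩ - x (D ⟨ξ, hξ⟩) = y ξ

local notation "κ[" k "]" => (Complex.I * (((k : ℝ) + 1 : ℝ) : ℂ))

theorem delta_of_resolvent
    {H : Type*} [NormedAddCommGroup H] [InnerProductSpace ℂ H] [CompleteSpace H]
    (D : H →ₗ.[ℂ] H) (hdense : Dense (D.domain : Set H)) (hsa : IsSelfAdjoint D)
    (x y : H →L[ℂ] H) (hxy : CommutatorRel D x y)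
    (μ : ℂ) (z : H →L[ℂ] H)
    (hz₁ : (x - μ • 1) * z = 1) (hz₂ : z * (x - μ • 1) = 1) :
    -- `z = (x − μ·1)⁻¹ ∈ dom(δ_D)` with `δ_D(z) = −z δ_D(x) z`
    CommutatorRel D z (-(z * y * z))
    -- in particular, if `δ_D(x)` is compact then `δ_D((x − μ·1)⁻¹)` is compact
    ∧ (IsCompactOperator ⇑y → IsCompactOperator ⇑(-(z * y * z))) := by
  constructor
  · -- main part
    obtain ⟨w, hw⟩ : ∃ w : H →L[ℂ] H, w = x - μ • 1 := ⟨_, rfl⟩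
    have hwapp : ∀ u : H, w u = x u - μ • u := by
      intro u
      rw [hw]
      simp [ContinuousLinearMap.sub_apply, ContinuousLinearMap.smul_apply,
        ContinuousLinearMap.one_apply]
    have hwz : ∀ u : H, w (z u) = u := by
      intro u
      rw [hw]
      have := congrArg (fun T : H →L[ℂ] H => T u) hz₁
      simpa [ContinuousLinearMap.mul_apply] using this
    have hzw : ∀ u : H, z (w u) = u := by
      intro u
      rw [hw]
      have := congrArg (fun T : H →L[ℂ] H => T u) hz₂
      simpa [ContinuousLinearMap.mul_apply] using this
    -- the resolvent family
    have hSex : ∀ (k : ℕ) (v : H), ∃ a, ∃ ha : a ∈ D.domain,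
        D ⟨a, ha⟩ + κ[k] • a = v := by
      intro k v
      exact aux_surj hdense hsa (by positivity) v
    choose S hSmem hSeq using hSex
    have hpos : ∀ k : ℕ, (0 : ℝ) < (k : ℝ) + 1 := fun k => by positivity
    -- uniqueness
    have huniq : ∀ (k : ℕ) (a : H) (ha : a ∈ D.domain) (v : H),
        D ⟨a, ha⟩ + κ[k] • a = v → a = S k v := by
      intro k a ha v h
      exact aux_uniq hdense hsa (hpos k) ha (hSmem k v) (by rw [h, hSeq k v])
    -- linearity of S
    have hSadd : ∀ (k : ℕ) (v v' : H), S k (v + v') = S k v + S k v' := by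
      intro k v v'
      refine (huniq k _ (add_mem (hSmem k v) (hSmem k v')) (v + v') ?_).symm
      calc D ⟨S k v + S k v', add_mem (hSmem k v) (hSmem k v')⟩
            + κ[k] • (S k v + S k v')
          = (D ⟨S k v, hSmem k v⟩ + κ[k] • S k v)
            + (D ⟨S k v', hSmem k v'⟩ + κ[k] • S k v') := by
            rw [Dadd _ _ (hSmem k v) (hSmem k v'), smul_add]; abel
        _ = v + v' := by rw [hSeq k v, hSeq k v']
    have hSsub : ∀ (k : ℕ) (v v' : H), S k (v - v') = S k v - S k v' := by
      intro k v v'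
      refine (huniq k _ (sub_mem (hSmem k v) (hSmem k v')) (v - v') ?_).symm
      calc D ⟨S k v - S k v', sub_mem (hSmem k v) (hSmem k v')⟩
            + κ[k] • (S k v - S k v')
          = (D ⟨S k v, hSmem k v⟩ + κ[k] • S k v)
            - (D ⟨S k v', hSmem k v'⟩ + κ[k] • S k v') := by
            rw [Dsub _ _ (hSmem k v) (hSmem k v'), smul_sub]; abel
        _ = v - v' := by rw [hSeq k v, hSeq k v']
    have hSsmul : ∀ (k : ℕ) (r : ℂ) (v : H), S k (r • v) = r • S k v := by
      intro k r v
      refine (huniq k _ (Submodule.smul_mem _ r (hSmem k v)) (r • v) ?_).symm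
      calc D ⟨r • S k v, Submodule.smul_mem _ r (hSmem k v)⟩
            + κ[k] • (r • S k v)
          = r • (D ⟨S k v, hSmem k v⟩ + κ[k] • S k v) := by
            rw [Dsmul r _ (hSmem k v), smul_add, smul_comm]
        _ = r • v := by rw [hSeq k v]
    -- D of S k
    have hDeq : ∀ (k : ℕ) (v : H),
        D ⟨S k v, hSmem k v⟩ = v - κ[k] • S k v :=
      fun k v => eq_sub_of_add_eq (hSeq k v)
    have hDmem : ∀ (k : ℕ) (ξ : H), ξ ∈ D.domain → D ⟨S k ξ, hSmem k ξ⟩ ∈ D.domain := by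
      intro k ξ hξ
      rw [hDeq k ξ]
      exact sub_mem hξ (Submodule.smul_mem _ _ (hSmem k ξ))
    -- commutation of S with D
    have hcommD : ∀ (k : ℕ) (ξ : H) (hξ : ξ ∈ D.domain),
        D ⟨S k ξ, hSmem k ξ⟩ = S k (D ⟨ξ, hξ⟩) := by
      intro k ξ hξ
      apply huniq k _ (hDmem k ξ hξ)
      have e1 : (⟨D ⟨S k ξ, hSmem k ξ⟩, hDmem k ξ hξ⟩ : D.domain)
          = ⟨ξ - κ[k] • S k ξ,
              sub_mem hξ (Submodule.smul_mem _ _ (hSmem k ξ))⟩ :=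
        Subtype.ext (hDeq k ξ)
      calc D ⟨D ⟨S k ξ, hSmem k ξ⟩, hDmem k ξ hξ⟩
            + κ[k] • D ⟨S k ξ, hSmem k ξ⟩
          = D ⟨ξ - κ[k] • S k ξ, _⟩
            + κ[k] • D ⟨S k ξ, hSmem k ξ⟩ := by rw [e1]
        _ = (D ⟨ξ, hξ⟩ - κ[k] • D ⟨S k ξ, hSmem k ξ⟩)
            + κ[k] • D ⟨S k ξ, hSmem k ξ⟩ := by
            rw [Dsub ξ _ hξ (Submodule.smul_mem _ _ (hSmem k ξ)),
              Dsmul _ _ (hSmem k ξ)]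
        _ = D ⟨ξ, hξ⟩ := by abel
    -- norm bound
    have hSnorm : ∀ (k : ℕ) (v : H), ((k : ℝ) + 1) * ‖S k v‖ ≤ ‖v‖ := by
      intro k v
      have := (aux_est hdense hsa (hpos k).le (S k v) (hSmem k v)).1
      rwa [hSeq k v] at this
    have hRnorm : ∀ (k : ℕ) (v : H), ‖κ[k] • S k v‖ ≤ ‖v‖ := by
      intro k v
      have hκnorm : ‖κ[k]‖ = (k : ℝ) + 1 := by
        rw [norm_mul, Complex.norm_I, one_mul, Complex.norm_real]
        exact abs_of_pos (hpos k)
      rw [norm_smul, hκnorm]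
      exact hSnorm k v
    -- strong convergence of the regularization
    have hRtend : ∀ (u : H) (f : ℕ → H), Tendsto f atTop (nhds u) →
        Tendsto (fun k : ℕ => κ[k] • S k (f k)) atTop (nhds u) := by
      intro u f hf
      rw [Metric.tendsto_atTop] at hf ⊢
      intro ε hε
      obtain ⟨ξ, hξmem, hξclose⟩ := hdense.exists_dist_lt u (show (0:ℝ) < ε/4 by linarith)
      obtain ⟨N₁, hN₁⟩ := hf (ε/4) (by linarith)
      obtain ⟨N₂, hN₂⟩ := exists_nat_gt (‖D ⟨ξ, hξmem⟩‖ / (ε/4))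
      refine ⟨max N₁ N₂, fun k hk => ?_⟩
      have hk₁ : N₁ ≤ k := le_trans (le_max_left _ _) hk
      have hk₂ : N₂ ≤ k := le_trans (le_max_right _ _) hk
      have p1 : dist (κ[k] • S k (f k)) (κ[k] • S k u) < ε/4 := by
        rw [dist_eq_norm, ← smul_sub, ← hSsub k (f k) u]
        calc ‖κ[k] • S k (f k - u)‖ ≤ ‖f k - u‖ := hRnorm k _
          _ < ε/4 := by rw [← dist_eq_norm]; exact hN₁ k hk₁
      have p2 : dist (κ[k] • S k u) (κ[k] • S k ξ) < ε/4 := by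
        rw [dist_eq_norm, ← smul_sub, ← hSsub k u ξ]
        calc ‖κ[k] • S k (u - ξ)‖ ≤ ‖u - ξ‖ := hRnorm k _
          _ < ε/4 := by rw [← dist_eq_norm]; exact hξclose
      have p3 : dist (κ[k] • S k ξ) ξ < ε/4 := by
        have e1 : κ[k] • S k ξ - ξ = -(S k (D ⟨ξ, hξmem⟩)) := by
          rw [← hcommD k ξ hξmem, hDeq k ξ, neg_sub]
        rw [dist_eq_norm, e1, norm_neg]
        have h2 := hSnorm k (D ⟨ξ, hξmem⟩)
        have h3 : ‖D ⟨ξ, hξmem⟩‖ / (ε/4) < ((k:ℝ) + 1) := by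
          calc ‖D ⟨ξ, hξmem⟩‖ / (ε/4) < (N₂ : ℝ) := hN₂
            _ ≤ (k : ℝ) := by exact_mod_cast hk₂
            _ ≤ (k : ℝ) + 1 := by linarith
        have h4 : ‖D ⟨ξ, hξmem⟩‖ < ((k:ℝ)+1) * (ε/4) := by
          rw [div_lt_iff₀ (by linarith : (0:ℝ) < ε/4)] at h3
          linarith [h3]
        nlinarith [norm_nonneg (S k (D ⟨ξ, hξmem⟩)), hpos k]
      have p4 : dist ξ u < ε/4 := by
        rw [dist_comm]
        exact hξclose
      calc dist (κ[k] • S k (f k)) u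
          ≤ dist (κ[k] • S k (f k)) (κ[k] • S k ξ) + dist (κ[k] • S k ξ) u :=
            dist_triangle _ _ _
        _ ≤ (dist (κ[k] • S k (f k)) (κ[k] • S k u) + dist (κ[k] • S k u) (κ[k] • S k ξ))
            + (dist (κ[k] • S k ξ) ξ + dist ξ u) :=
            add_le_add (dist_triangle _ _ _) (dist_triangle _ _ _)
        _ < (ε/4 + ε/4) + (ε/4 + ε/4) := by
            apply add_lt_add (add_lt_add p1 p2) (add_lt_add p3 p4)
        _ = ε := by ring
    -- commutation with w
    have hwcomm : ∀ (k : ℕ) (v : H),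
        w (S k v) = S k (w v + y (S k v)) := by
      intro k v
      obtain ⟨hxmem, hxeq⟩ := hxy (S k v) (hSmem k v)
      have hwmem : w (S k v) ∈ D.domain := by
        rw [hwapp]
        exact sub_mem hxmem (Submodule.smul_mem _ _ (hSmem k v))
      apply huniq k _ hwmem
      have e0 : (⟨w (S k v), hwmem⟩ : D.domain)
          = ⟨x (S k v) - μ • S k v, sub_mem hxmem (Submodule.smul_mem _ _ (hSmem k v))⟩ :=
        Subtype.ext (hwapp _)
      have e1 : D ⟨w (S k v), hwmem⟩ = w (D ⟨S k v, hSmem k v⟩) + y (S k v) := by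
        rw [e0, Dsub _ _ hxmem (Submodule.smul_mem _ _ (hSmem k v)),
          Dsmul _ _ (hSmem k v), hwapp]
        have e2 : D ⟨x (S k v), hxmem⟩ = x (D ⟨S k v, hSmem k v⟩) + y (S k v) := by
          rw [← hxeq]; abel
        rw [e2]
        abel
      calc D ⟨w (S k v), hwmem⟩ + κ[k] • w (S k v)
          = w (D ⟨S k v, hSmem k v⟩ + κ[k] • S k v)
            + y (S k v) := by
            rw [e1, map_add, ContinuousLinearMap.map_smul]
            abel
        _ = w v + y (S k v) := by rw [hSeq k v]
    -- commutation with z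
    have hzcomm : ∀ (k : ℕ) (v : H),
        S k (z v) = z (S k v) + z (S k (y (S k (z v)))) := by
      intro k v
      have e1 : w (S k (z v)) = S k v + S k (y (S k (z v))) := by
        rw [hwcomm k (z v), hwz v, hSadd]
      have := congrArg z e1
      rwa [hzw, map_add] at this
    -- final computation
    intro ξ hξ
    have hamem : ∀ k : ℕ, κ[k] • S k (z ξ) ∈ D.domain :=
      fun k => Submodule.smul_mem _ _ (hSmem k (z ξ))
    have h2eq : ∀ k : ℕ, D ⟨κ[k] • S k (z ξ), hamem k⟩
        = z (κ[k] • S k (D ⟨ξ, hξ⟩))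
          - z (κ[k] • S k (y (κ[k] • S k (z ξ)))) := by
      intro k
      have eL : D ⟨κ[k] • S k (z ξ), hamem k⟩
          = κ[k] • z ξ - (κ[k] * κ[k]) • z (S k ξ)
            - (κ[k] * κ[k]) • z (S k (y (S k (z ξ)))) := by
        rw [Dsmul _ _ (hSmem k (z ξ)), hDeq k (z ξ)]
        conv_lhs => rw [hzcomm k ξ]
        simp only [smul_sub, smul_add, smul_smul]
        abel
      have eR : z (κ[k] • S k (D ⟨ξ, hξ⟩))
            - z (κ[k] • S k (y (κ[k] • S k (z ξ))))
          = κ[k] • z ξ - (κ[k] * κ[k]) • z (S k ξ)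
            - (κ[k] * κ[k]) • z (S k (y (S k (z ξ)))) := by
        rw [← hcommD k ξ hξ, hDeq k ξ]
        rw [ContinuousLinearMap.map_smul y, hSsmul]
        simp only [smul_sub, smul_add, ContinuousLinearMap.map_smul, map_sub, map_add, smul_smul]
      rw [eL, eR]
    have h1 : Tendsto (fun k : ℕ => κ[k] • S k (z ξ))
        atTop (nhds (z ξ)) := hRtend (z ξ) (fun _ => z ξ) tendsto_const_nhds
    have t1 : Tendsto (fun k : ℕ => z (κ[k] • S k (D ⟨ξ, hξ⟩)))
        atTop (nhds (z (D ⟨ξ, hξ⟩))) :=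
      (z.continuous.tendsto _).comp
        (hRtend (D ⟨ξ, hξ⟩) (fun _ => D ⟨ξ, hξ⟩) tendsto_const_nhds)
    have t2 : Tendsto (fun k : ℕ => y (κ[k] • S k (z ξ)))
        atTop (nhds (y (z ξ))) := (y.continuous.tendsto _).comp h1
    have t3 : Tendsto (fun k : ℕ => κ[k] • S k (y (κ[k] • S k (z ξ))))
        atTop (nhds (y (z ξ))) := hRtend (y (z ξ)) _ t2
    have t4 : Tendsto (fun k : ℕ => z (κ[k] • S k (y (κ[k] • S k (z ξ)))))
        atTop (nhds (z (y (z ξ)))) := (z.continuous.tendsto _).comp t3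
    have h2 : Tendsto (fun k : ℕ => D ⟨κ[k] • S k (z ξ), hamem k⟩)
        atTop (nhds (z (D ⟨ξ, hξ⟩) - z (y (z ξ)))) := by
      have := t1.sub t4
      convert this using 1
      funext k
      exact h2eq k
    obtain ⟨hmem, heq⟩ := aux_closed hdense hsa hamem h1 h2
    refine ⟨hmem, ?_⟩
    rw [heq]
    simp only [ContinuousLinearMap.mul_apply, ContinuousLinearMap.neg_apply]
    abel
  · -- compactness
    intro hy
    have hfun : (⇑(-(z * y * z)) : H → H) = -(⇑z ∘ ⇑y ∘ ⇑z) := by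
      funext u
      simp [ContinuousLinearMap.mul_apply, ContinuousLinearMap.neg_apply, Function.comp]
    rw [hfun]
    exact (((hy.comp_clm z).continuous_comp z.continuous)).neg
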